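/- Let $G$ be a Polish group with a compatible complete two-sided invariant metric $d$, and let $N$ be a closed non-archimedean subgroup of $G$ (i.e., $N$ has a neighborhood base at the identity consisting of open subgroups of $N$). Let $(e_n)$ be a sequence in $N$ such that $\lim_n d(e_n^{-1}e_{n+1}, 1_G) = 0$. Then for every $\varepsilon > 0$ there is $N_0$ such that $d(e_n, e_m) < \varepsilon$ for all $m \geq n \geq N_0$; in particular $(e_n)$ is Cauchy and converges in $N$. -/

import Mathlib

open Filter Topology

theorem stmt_16 {G : Type*} [MetricSpace G] [Group G] [IsTopologicalGroup G]
    [PolishSpace G] [CompleteSpace G]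
    (hd : ∀ a b g h : G, dist (a * g * b) (a * h * b) = dist g h)
    (N : Subgroup G) (hclosed : IsClosed (N : Set G))
    -- `N` is non-archimedean: open subgroups of `N` form a neighborhood base of `1` in `N`
    (hNA : ∀ ε > (0 : ℝ), ∃ M : Subgroup G, M ≤ N ∧
      (∀ h ∈ M, dist h (1 : G) < ε) ∧
      ∃ ε' > (0 : ℝ), ∀ h ∈ N, dist h (1 : G) < ε' → h ∈ M)
    (e : ℕ → G) (he : ∀ n, e n ∈ N)
    (hcauchy : Tendsto (fun n => dist ((e n)⁻¹ * e (n + 1)) (1 : G)) atTop (𝓝 0)) :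
    (∀ ε > (0 : ℝ), ∃ N₀ : ℕ, ∀ m n : ℕ, N₀ ≤ n → n ≤ m → dist (e n) (e m) < ε) ∧
    ∃ l ∈ N, Tendsto e atTop (𝓝 l) := by
  have key : ∀ ε > (0 : ℝ), ∃ N₀ : ℕ, ∀ m n : ℕ, N₀ ≤ n → n ≤ m →
      dist (e n) (e m) < ε := by
    intro ε hε
    obtain ⟨M, hMN, hMε, ε', hε', hball⟩ := hNA ε hε
    have hev : ∀ᶠ n in atTop, dist ((e n)⁻¹ * e (n + 1)) (1 : G) < ε' :=
      hcauchy.eventually (gt_mem_nhds hε')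
    obtain ⟨N₀, hN₀⟩ := eventually_atTop.mp hev
    refine ⟨N₀, fun m n hn hnm => ?_⟩
    have hmem : ∀ k, n ≤ k → (e n)⁻¹ * e k ∈ M := by
      intro k hk
      induction k, hk using Nat.le_induction with
      | base => simpa using M.one_mem
      | succ k hk ih =>
        have h1 : (e k)⁻¹ * e (k + 1) ∈ M :=
          hball _ (N.mul_mem (N.inv_mem (he k)) (he (k + 1))) (hN₀ k (hn.trans hk))
        have := M.mul_mem ih h1
        simpa [mul_assoc] using this
    have hdist : dist (e n) (e m) = dist ((e n)⁻¹ * e m) (1 : G) := by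
      have := hd (e n)⁻¹ 1 (e n) (e m)
      simp only [mul_one] at this
      rw [← this, inv_mul_cancel, dist_comm]
    rw [hdist]
    exact hMε _ (hmem m hnm)
  refine ⟨key, ?_⟩
  have hcs : CauchySeq e := by
    rw [Metric.cauchySeq_iff]
    intro ε hε
    obtain ⟨N₀, hN₀⟩ := key ε hε
    refine ⟨N₀, fun m hm n hn => ?_⟩
    rcases le_total n m with h | h
    · rw [dist_comm]; exact hN₀ m n hn h
    · exact hN₀ n m hm h
  obtain ⟨l, hl⟩ := cauchySeq_tendsto_of_complete hcs
  exact ⟨l, hclosed.mem_of_tendsto hl (Eventually.of_forall he), hl⟩
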